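/- arXiv:0805.3268 — 2 statements merged into one kernel-verified Lean document; each statement's English description precedes it below -/
import Mathlib

section
/- Let m, n be positive natural numbers with m + n > 2. Then there exist nonzero real constants A and B satisfying both conditions (C1): 2ABn + (m-2)A² - B²n = 0, and (C2): A(m-2) + Bn = 2. -/
/-- For positive naturals m, n with m + n > 2, there exist nonzero real
constants A, B satisfying (C1): 2ABn + (m-2)A² - B²n = 0 and (C2): A(m-2) + Bn = 2. -/
theorem exists_dilaton_constants (m n : ℕ) (hm : 0 < m) (hn : 0 < n) (hmn : 2 < m + n) :
    ∃ A B : ℝ, A ≠ 0 ∧ B ≠ 0 ∧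
      2 * A * B * n + ((m : ℝ) - 2) * A ^ 2 - B ^ 2 * n = 0 ∧
      A * ((m : ℝ) - 2) + B * n = 2 := by
  have hnR : (0:ℝ) < n := by exact_mod_cast hn
  have hmnR : (1:ℝ) ≤ (m:ℝ) + n - 2 := by
    have h3 : (3:ℕ) ≤ m + n := hmn
    have : ((3:ℕ):ℝ) ≤ ((m+n:ℕ):ℝ) := by exact_mod_cast h3
    push_cast at this
    linarith
  set s := Real.sqrt ((n:ℝ) * ((n:ℝ) + m - 2)) with hs
  have hsnn : 0 ≤ s := Real.sqrt_nonneg _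
  have hs2 : s ^ 2 = (n:ℝ) * ((n:ℝ) + m - 2) := by
    rw [hs, sq, Real.mul_self_sqrt]
    nlinarith
  have hD : (0:ℝ) < (m:ℝ) - 2 + n + s := by linarith
  set A := 2 / ((m:ℝ) - 2 + n + s) with hA
  set B := A * ((n:ℝ) + s) / n with hB
  have hAD : A * ((m:ℝ) - 2 + n + s) = 2 := by
    rw [hA]; field_simp
  have hBn : B * n = A * ((n:ℝ) + s) := by
    rw [hB]; field_simp
  have hApos : 0 < A := by rw [hA]; positivity
  have hBpos : 0 < B := by rw [hB]; positivity
  refine ⟨A, B, hApos.ne', hBpos.ne', ?_, ?_⟩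
  · have key : (2 * A * B * n + ((m : ℝ) - 2) * A ^ 2 - B ^ 2 * n) * n = 0 := by
      linear_combination (2*A*(n:ℝ) - B*(n:ℝ) - A*((n:ℝ)+s)) * hBn + (-A^2) * hs2
    exact (mul_eq_zero.mp key).resolve_right hnR.ne'
  · linear_combination hBn + hAD
end

section
/- Let m, n be positive naturals with m + n > 2, and suppose (A,B) and (A',B') are both pairs of nonzero reals satisfying (C1) and (C2), with m ≠ 2. Then either (A,B) = (A',B'), or A/B and A'/B' are the two distinct roots of (m-2)θ² + 2nθ - n = 0; in particular there are at most two such pairs. -/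
lemma pair_quad (c n A B : ℝ) (hB : B ≠ 0)
    (hC1 : 2 * A * B * n + c * A ^ 2 - B ^ 2 * n = 0) :
    c * (A / B) ^ 2 + 2 * n * (A / B) - n = 0 := by
  have h : c * (A / B) ^ 2 + 2 * n * (A / B) - n
      = (2 * A * B * n + c * A ^ 2 - B ^ 2 * n) / B ^ 2 := by
    field_simp
    ring
  rw [h, hC1, zero_div]

lemma pair_lin (c n A B : ℝ) (hB : B ≠ 0)
    (hC2 : A * c + B * n = 2) :
    (c * (A / B) + n) * B = 2 := by
  field_simp
  linear_combination hC2

/-- With m ≠ 2, if (A,B) and (A',B') are two pairs of nonzero reals both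
satisfying (C1) and (C2), then either they are equal or A/B and A'/B' are the two distinct
roots of (m-2)θ² + 2nθ - n = 0; in particular there are at most two such pairs. -/
theorem at_most_two_pairs (m n : ℕ) (hm : 0 < m) (hn : 0 < n) (hmn : 2 < m + n)
    (hm2 : m ≠ 2) (A B A' B' : ℝ)
    (hA : A ≠ 0) (hB : B ≠ 0) (hA' : A' ≠ 0) (hB' : B' ≠ 0)
    (hC1 : 2 * A * B * n + ((m : ℝ) - 2) * A ^ 2 - B ^ 2 * n = 0)
    (hC2 : A * ((m : ℝ) - 2) + B * n = 2)
    (hC1' : 2 * A' * B' * n + ((m : ℝ) - 2) * A' ^ 2 - B' ^ 2 * n = 0)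
    (hC2' : A' * ((m : ℝ) - 2) + B' * n = 2) :
    ((A, B) = (A', B') ∨
      (A / B ≠ A' / B' ∧
        ((m : ℝ) - 2) * (A / B) ^ 2 + 2 * n * (A / B) - n = 0 ∧
        ((m : ℝ) - 2) * (A' / B') ^ 2 + 2 * n * (A' / B') - n = 0)) ∧
    (∃ p q : ℝ × ℝ, ∀ r : ℝ × ℝ,
      (r.1 ≠ 0 ∧ r.2 ≠ 0 ∧
        2 * r.1 * r.2 * n + ((m : ℝ) - 2) * r.1 ^ 2 - r.2 ^ 2 * n = 0 ∧
        r.1 * ((m : ℝ) - 2) + r.2 * n = 2) → r = p ∨ r = q) := by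
  set c : ℝ := (m : ℝ) - 2 with hcdef
  have hc : c ≠ 0 := by
    have : (m : ℝ) ≠ 2 := by exact_mod_cast hm2
    intro h; apply this; linarith [h]
  have hnpos : (0:ℝ) < n := by exact_mod_cast hn
  have hmnR : (3:ℝ) ≤ (m : ℝ) + n := by exact_mod_cast hmn
  have hdisc : (0:ℝ) ≤ n ^ 2 + n * c := by nlinarith
  set s : ℝ := Real.sqrt (n ^ 2 + n * c) with hsdef
  have hs : s ^ 2 = n ^ 2 + n * c := Real.sq_sqrt hdisc
  constructor
  · by_cases h : A / B = A' / B'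
    · left
      have h1 := pair_lin c n A B hB hC2
      have h2 := pair_lin c n A' B' hB' hC2'
      rw [h] at h1
      have hBB : B = B' := by
        linear_combination (B' * h1 - B * h2) / 2
      have hAA : A = A' := by
        have h3 : A / B * B = A' / B' * B' := by rw [h, hBB]
        field_simp at h3
        exact h3
      rw [hAA, hBB]
    · right
      exact ⟨h, pair_quad c n A B hB hC1, pair_quad c n A' B' hB' hC1'⟩
  · refine ⟨((s - n) / c * (2 / s), 2 / s), ((-s - n) / c * (2 / (-s)), 2 / (-s)), ?_⟩
    rintro ⟨a, b⟩ ⟨ha, hb, h1, h2⟩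
    simp only at ha hb h1 h2 ⊢
    have hq := pair_quad c n a b hb h1
    have hl := pair_lin c n a b hb h2
    have hne : c * (a / b) + n ≠ 0 := by
      intro h0; rw [h0] at hl; simp at hl
    have hfac : (c * (a / b) + n - s) * (c * (a / b) + n + s) = 0 := by
      linear_combination c * hq - hs
    have hlin : c * a + n * b = (c * (a / b) + n) * b := by
      field_simp
    rcases mul_eq_zero.mp hfac with h0 | h0
    · left
      have hseq : c * (a / b) + n = s := by linarith
      have hs0 : s ≠ 0 := by rw [← hseq]; exact hne
      rw [hseq] at hl hlin
      have hbval : b = 2 / s := by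
        field_simp
        linear_combination hl
      have haval : a = (s - n) / c * (2 / s) := by
        field_simp
        linear_combination s * hlin + (s - n) * hl
      exact Prod.ext haval hbval
    · right
      have hseq : c * (a / b) + n = -s := by linarith
      have hs0 : -s ≠ 0 := by rw [← hseq]; exact hne
      have hs0' : s ≠ 0 := fun h => hs0 (by rw [h]; ring)
      rw [hseq] at hl hlin
      have hbval : b = 2 / (-s) := by
        field_simp
        linear_combination -hl
      have haval : a = (-s - n) / c * (2 / (-s)) := by
        field_simp
        linear_combination s * hlin + (n + s) * hl
      exact Prod.ext haval hbval
end
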